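/- For n ≥ 1 and 0 ≤ k ≤ n, the number of independent sets of size k in the graph G_n on 2n−1 vertices formed by the vertices and edges of the path P_n (with an edge of G_n between two elements iff they are 'adjacent': consecutive path-edges, or a path-edge and one of its two endpoints — but NOT between two path-vertices and NOT between a path-edge and a non-incident vertex) equals Σ_j M(n,j) C(n-2j, k-j). -/

import Mathlib

/-- The set of matchings of size `j` in the path graph on `n` vertices:
edges are indexed `0, …, n-2`, and a matching is a set of edge indices
pairwise differing by at least 2 (pairwise vertex-disjoint edges). -/
def pathMatchings (n j : ℕ) : Finset (Finset ℕ) :=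
  ((Finset.range (n - 1)).powersetCard j).filter
    (fun s => ∀ a ∈ s, ∀ b ∈ s, a ≠ b → a + 2 ≤ b ∨ b + 2 ≤ a)

/-- `M n j` = number of matchings of size `j` in the path graph `P_n`. -/
def M (n j : ℕ) : ℕ := (pathMatchings n j).card

/-- `H n k = Σ_{j ≥ 0} M(n,j) · C(n-2j, k-j)`.  Since `C(n-2j, k-j) = 0`
for `j > k`, the sum may be truncated at `j = k`. -/
def H (n k : ℕ) : ℕ := ∑ j ∈ Finset.range (k + 1), M n j * Nat.choose (n - 2 * j) (k - j)

/-- One-directional adjacency generating the graph `G_n` on the vertices and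
edges of the path `P_n`: consecutive path-edges are related, and a path-edge
is related to each of its two endpoints. -/
def pathRel (n : ℕ) : (Fin n ⊕ Fin (n - 1)) → (Fin n ⊕ Fin (n - 1)) → Prop
  | Sum.inr i, Sum.inr j => i.val + 1 = j.val
  | Sum.inr i, Sum.inl v => v.val = i.val ∨ v.val = i.val + 1
  | _, _ => False

/-- The graph `G_n` on `{v_1,…,v_n} ∪ {e_1,…,e_{n-1}}` with edges
`{e_i, e_{i+1}}`, `{e_i, v_i}`, `{e_i, v_{i+1}}` only. -/
def pathGraph (n : ℕ) : SimpleGraph (Fin n ⊕ Fin (n - 1)) where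
  Adj a b := pathRel n a b ∨ pathRel n b a
  symm := ⟨by intro a b h; tauto⟩
  loopless :=
    ⟨by rintro (v | e) h <;> rcases h with h | h <;> simp [pathRel] at h⟩

open Finset

/-- Matchings of the path, indexed by `Fin (n-1)`. -/
def finMatchings (n j : ℕ) : Finset (Finset (Fin (n - 1))) :=
  Finset.univ.filter
    (fun s => s.card = j ∧ ∀ a ∈ s, ∀ b ∈ s, a ≠ b → a.val + 2 ≤ b.val ∨ b.val + 2 ≤ a.val)

lemma card_finMatchings (n j : ℕ) : (finMatchings n j).card = M n j := by
  classical
  rw [M]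
  apply Finset.card_bij (fun s _ => s.image Fin.val)
  · intro s hs
    simp only [finMatchings, mem_filter, mem_univ, true_and] at hs
    simp only [pathMatchings, mem_filter, mem_powersetCard]
    refine ⟨⟨?_, ?_⟩, ?_⟩
    · intro m hm
      simp only [mem_image] at hm
      obtain ⟨a, _, rfl⟩ := hm
      exact mem_range.mpr a.isLt
    · rw [Finset.card_image_of_injective _ Fin.val_injective, hs.1]
    · intro a ha b hb hab
      simp only [mem_image] at ha hb
      obtain ⟨x, hx, rfl⟩ := ha
      obtain ⟨y, hy, rfl⟩ := hb
      exact hs.2 x hx y hy (fun h => hab (by rw [h]))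
  · intro s hs t ht h
    exact Finset.image_injective Fin.val_injective h
  · intro J hJ
    simp only [pathMatchings, mem_filter, mem_powersetCard] at hJ
    have hlt : ∀ m ∈ J, m < n - 1 := fun m hm => mem_range.mp (hJ.1.1 hm)
    refine ⟨J.attachFin hlt, ?_, ?_⟩
    · simp only [finMatchings, mem_filter, mem_univ, true_and]
      refine ⟨by rw [Finset.card_attachFin, hJ.1.2], ?_⟩
      intro a ha b hb hab
      rw [Finset.mem_attachFin] at ha hb
      exact hJ.2 a.val ha b.val hb (fun h => hab (Fin.val_injective h))
    · ext m
      simp only [mem_image]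
      constructor
      · rintro ⟨a, ha, rfl⟩
        exact (Finset.mem_attachFin hlt).mp ha
      · intro hm
        exact ⟨⟨m, hlt m hm⟩, (Finset.mem_attachFin hlt).mpr hm, rfl⟩

open scoped Classical in
theorem indep_set_count (n k : ℕ) (hn : 1 ≤ n) (hk : k ≤ n) :
    ((Finset.univ : Finset (Finset (Fin n ⊕ Fin (n - 1)))).filter
        (fun S => S.card = k ∧ ∀ a ∈ S, ∀ b ∈ S, ¬ (pathGraph n).Adj a b)).card
      = H n k := by
  classical
  set T := ((Finset.univ : Finset (Finset (Fin n ⊕ Fin (n - 1)))).filter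
        (fun S => S.card = k ∧ ∀ a ∈ S, ∀ b ∈ S, ¬ (pathGraph n).Adj a b)) with hT
  have hadj : ∀ (a b : Fin n ⊕ Fin (n - 1)),
      (pathGraph n).Adj a b ↔ (pathRel n a b ∨ pathRel n b a) := fun a b => Iff.rfl
  -- step 1: fiberwise over the size of the edge part
  have h1 : T.card = ∑ j ∈ range (k + 1),
      (T.filter (fun S => S.toRight.card = j)).card := by
    apply Finset.card_eq_sum_card_fiberwise
    intro S hS
    simp only [Finset.mem_coe] at hS ⊢
    rw [hT, mem_filter] at hS
    have hle : S.toRight.card ≤ S.card := by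
      have := @Finset.card_toLeft_add_card_toRight _ _ S
      omega
    rw [mem_range]
    omega
  rw [h1, H]
  apply Finset.sum_congr rfl
  intro j hj
  rw [mem_range] at hj
  have hjk : j ≤ k := by omega
  rw [← card_finMatchings]
  -- step 2: fiberwise over the edge part itself
  have h2 : (T.filter (fun S => S.toRight.card = j)).card
      = ∑ E ∈ finMatchings n j,
          ((T.filter (fun S => S.toRight.card = j)).filter
            (fun S => S.toRight = E)).card := by
    apply Finset.card_eq_sum_card_fiberwise
    intro S hS
    rw [Finset.mem_coe] at hS ⊢
    rw [mem_filter] at hS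
    obtain ⟨hS1, hS2⟩ := hS
    rw [hT, mem_filter] at hS1
    simp only [finMatchings, mem_filter, mem_univ, true_and]
    refine ⟨hS2, ?_⟩
    intro a ha b hb hab
    rw [Finset.mem_toRight] at ha hb
    have := hS1.2.2 _ ha _ hb
    rw [hadj] at this
    simp only [pathRel] at this
    push_neg at this
    have hne : a.val ≠ b.val := fun h => hab (Fin.val_injective h)
    omega
  rw [h2]
  -- step 3: each fiber has cardinality `C(n-2j, k-j)`
  rw [Finset.sum_congr rfl (g := fun _ => Nat.choose (n - 2 * j) (k - j)) ?_, sum_const,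
    smul_eq_mul]
  intro E hE
  simp only [finMatchings, mem_filter, mem_univ, true_and] at hE
  obtain ⟨hEcard, hEsep⟩ := hE
  -- the allowed vertex set
  set allowed : Finset (Fin n) :=
    Finset.univ.filter (fun v : Fin n => ∀ i ∈ E, v.val ≠ i.val ∧ v.val ≠ i.val + 1)
    with hallowed
  have hallowed_card : allowed.card = n - 2 * j := by
    have hbad : (Finset.univ.filter
        (fun v : Fin n => ¬ ∀ i ∈ E, v.val ≠ i.val ∧ v.val ≠ i.val + 1)).card = 2 * j := by
      have heq : (Finset.univ.filter
          (fun v : Fin n => ¬ ∀ i ∈ E, v.val ≠ i.val ∧ v.val ≠ i.val + 1))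
          = E.biUnion (fun i => ({⟨i.val, by omega⟩, ⟨i.val + 1, by
              have := i.isLt; omega⟩} : Finset (Fin n))) := by
        ext v
        simp only [mem_filter, mem_univ, true_and, mem_biUnion, mem_insert, mem_singleton,
          Fin.ext_iff]
        constructor
        · intro h
          push_neg at h
          obtain ⟨i, hi, h⟩ := h
          exact ⟨i, hi, by tauto⟩
        · rintro ⟨i, hi, h⟩ hall
          have := hall i hi
          omega
      rw [heq, Finset.card_biUnion]
      · have hc2 : ∀ i ∈ E, ({⟨i.val, by omega⟩, ⟨i.val + 1, by
            have := i.isLt; omega⟩} : Finset (Fin n)).card = 2 := by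
          intro i _
          rw [Finset.card_insert_of_notMem, Finset.card_singleton]
          simp only [mem_singleton, Fin.ext_iff]
          omega
        rw [Finset.sum_congr rfl hc2, sum_const, smul_eq_mul, hEcard, Nat.mul_comm]
      · intro a ha b hb hab
        have hsep := hEsep a ha b hb hab
        simp only [Finset.disjoint_left, mem_insert, mem_singleton]
        rintro x (h | h) (h' | h') <;>
          · simp only [Fin.ext_iff] at h h'
            omega
    have := Finset.card_filter_add_card_filter_not
      (s := (Finset.univ : Finset (Fin n)))
      (fun v : Fin n => ∀ i ∈ E, v.val ≠ i.val ∧ v.val ≠ i.val + 1)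
    rw [Finset.card_univ, Fintype.card_fin] at this
    rw [hallowed]
    omega
  -- the fiber is in bijection with `(k-j)`-subsets of `allowed`
  have hfiber : ((T.filter (fun S => S.toRight.card = j)).filter
      (fun S => S.toRight = E)).card = (allowed.powersetCard (k - j)).card := by
    refine Finset.card_bij' (fun S _ => S.toLeft) (fun V _ => V.disjSum E) ?hi ?hj ?li ?ri
    case hi =>
      -- forward map lands in target
      intro S hS
      simp only [mem_filter] at hS
      obtain ⟨⟨hS1, hS2⟩, hS3⟩ := hS
      rw [hT, mem_filter] at hS1
      obtain ⟨-, hcard, hindep⟩ := hS1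
      rw [mem_powersetCard]
      constructor
      · intro v hv
        rw [Finset.mem_toLeft] at hv
        rw [hallowed, mem_filter]
        refine ⟨mem_univ _, ?_⟩
        intro i hi
        rw [← hS3, Finset.mem_toRight] at hi
        have := hindep _ hv _ hi
        rw [hadj] at this
        simp only [pathRel] at this
        push_neg at this
        tauto
      · show S.toLeft.card = k - j
        have := @Finset.card_toLeft_add_card_toRight _ _ S
        rw [hS3, hEcard] at this
        omega
    case hj =>
      -- backward map lands in source
      intro V hV
      rw [mem_powersetCard] at hV
      obtain ⟨hVsub, hVcard⟩ := hV
      simp only [mem_filter]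
      refine ⟨⟨?_, ?_⟩, ?_⟩
      · rw [hT, mem_filter]
        refine ⟨mem_univ _, ?_⟩
        constructor
        · rw [Finset.card_disjSum, hVcard, hEcard]; omega
        · rintro (v | i) ha (w | i') hb hadjab
          · rw [hadj] at hadjab; simp [pathRel] at hadjab
          · -- inl v, inr i'
            rw [Finset.inl_mem_disjSum] at ha
            rw [Finset.inr_mem_disjSum] at hb
            have := hVsub ha
            rw [hallowed, mem_filter] at this
            have h2 := this.2 i' hb
            rw [hadj] at hadjab
            simp only [pathRel] at hadjab
            tauto
          · -- inr i, inl w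
            rw [Finset.inr_mem_disjSum] at ha
            rw [Finset.inl_mem_disjSum] at hb
            have := hVsub hb
            rw [hallowed, mem_filter] at this
            have h2 := this.2 i ha
            rw [hadj] at hadjab
            simp only [pathRel] at hadjab
            tauto
          · -- inr i, inr i'
            rw [Finset.inr_mem_disjSum] at ha hb
            rw [hadj] at hadjab
            simp only [pathRel] at hadjab
            by_cases hii : i = i'
            · subst hii; omega
            · have := hEsep i ha i' hb hii
              omega
      · rw [Finset.toRight_disjSum, hEcard]
      · rw [Finset.toRight_disjSum]
    case li =>
      -- left inverse
      intro S hS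
      simp only [mem_filter] at hS
      show S.toLeft.disjSum E = S
      rw [← hS.2]
      exact Finset.toLeft_disjSum_toRight
    case ri =>
      -- right inverse
      intro V _
      exact Finset.toLeft_disjSum
  rw [hfiber, Finset.card_powersetCard, hallowed_card]
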